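/- arXiv:1203.0949 — 3 statements merged into one kernel-verified Lean document; each statement's English description precedes it below -/
import Mathlib

section
/- Let τ be the unique solution of tan τ = τ in (π, 3π/2). Then for every a ≠ 0, the conjugate point (x_c, y_c) = E(τ/|a|, a) = (sin(aτ/|a|)/a, τ/(2a|a|) − sin(2aτ/|a|)/(4a²)) satisfies |y_c| = (x_c²/2)·(1/(cos τ · sin τ) − 1/τ). Hence the first conjugate locus from the origin of the Grushin plane is contained in the union of the two parabolas {(x,y) : y = ±(x²/2)(1/(cos τ sin τ) − 1/τ)}. -/
open Real

/-- with `τ` the unique solution of `tan τ = τ` in `(π, 3π/2)`, the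
conjugate point `(x_c, y_c) = E(τ/|a|, a)` satisfies
`|y_c| = (x_c²/2)(1/(cos τ sin τ) − 1/τ)`; hence it lies on the union of the two
parabolas `y = ±(x²/2)(1/(cos τ sin τ) − 1/τ)`. -/
theorem grushin_conjugate_locus_parabolas (τ : ℝ)
    (hτ : τ ∈ Set.Ioo π (3 * π / 2)) (htan : tan τ = τ)
    (a : ℝ) (ha : a ≠ 0) (xc yc : ℝ)
    (hxc : xc = sin (a * (τ / |a|)) / a)
    (hyc : yc = τ / (2 * a * |a|) - sin (2 * a * (τ / |a|)) / (4 * a ^ 2)) :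
    |yc| = xc ^ 2 / 2 * (1 / (cos τ * sin τ) - 1 / τ) ∧
    ((xc, yc) : ℝ × ℝ) ∈
      {p : ℝ × ℝ | p.2 = p.1 ^ 2 / 2 * (1 / (cos τ * sin τ) - 1 / τ)} ∪
      {p : ℝ × ℝ | p.2 = -(p.1 ^ 2 / 2 * (1 / (cos τ * sin τ) - 1 / τ))} := by
  obtain ⟨hπτ, _⟩ := hτ
  have hτ0 : 0 < τ := lt_trans pi_pos hπτ
  have hcos : cos τ ≠ 0 := by
    intro h
    rw [tan_eq_sin_div_cos, h, div_zero] at htan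
    exact hτ0.ne htan
  have hsin : sin τ = τ * cos τ := by
    rw [tan_eq_sin_div_cos] at htan
    field_simp at htan
    linarith [htan]
  have hsinne : sin τ ≠ 0 := by
    rw [hsin]; exact mul_ne_zero hτ0.ne' hcos
  have ha2 : (0:ℝ) < a ^ 2 := by positivity
  have hkey : 0 < τ ^ 2 - sin τ ^ 2 := by
    nlinarith [sin_sq_le_one τ, pi_gt_three]
  have hrhsval : 0 ≤ (τ ^ 2 - sin τ ^ 2) / (2 * a ^ 2 * τ) := by positivity
  rcases lt_or_gt_of_ne ha with hneg | hpos
  · -- a < 0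
    have habs : |a| = -a := abs_of_neg hneg
    have hxc' : xc = -sin τ / a := by
      rw [hxc, habs]
      have h1 : a * (τ / a) = τ := by field_simp
      have : a * (τ / -a) = -τ := by rw [div_neg, mul_neg, h1]
      rw [this, sin_neg]
    have hyeq : yc = -((τ ^ 2 - sin τ ^ 2) / (2 * a ^ 2 * τ)) := by
      have h1 : a * (τ / a) = τ := by field_simp
      have h2 : 2 * a * (τ / |a|) = -(2 * τ) := by
        rw [habs, div_neg, mul_assoc, mul_neg, h1]; ring
      rw [hyc, h2, habs, sin_neg, sin_two_mul]
      field_simp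
      linear_combination (-4 * sin τ) * hsin
    have hrhs : xc ^ 2 / 2 * (1 / (cos τ * sin τ) - 1 / τ)
        = (τ ^ 2 - sin τ ^ 2) / (2 * a ^ 2 * τ) := by
      rw [hxc']
      field_simp
      linear_combination τ * hsin
    constructor
    · rw [hyeq, abs_neg, abs_of_nonneg hrhsval, hrhs]
    · right
      simp only [Set.mem_setOf_eq]
      rw [hyeq, hrhs]
  · -- 0 < a
    have habs : |a| = a := abs_of_pos hpos
    have hxc' : xc = sin τ / a := by
      rw [hxc, habs]
      have : a * (τ / a) = τ := by field_simp
      rw [this]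
    have hyeq : yc = (τ ^ 2 - sin τ ^ 2) / (2 * a ^ 2 * τ) := by
      have h1 : a * (τ / a) = τ := by field_simp
      have h2 : 2 * a * (τ / |a|) = 2 * τ := by rw [habs, mul_assoc, h1]
      rw [hyc, h2, habs, sin_two_mul]
      field_simp
      linear_combination (4 * sin τ) * hsin
    have hrhs : xc ^ 2 / 2 * (1 / (cos τ * sin τ) - 1 / τ)
        = (τ ^ 2 - sin τ ^ 2) / (2 * a ^ 2 * τ) := by
      rw [hxc']
      field_simp
      linear_combination τ * hsin
    constructor
    · rw [hyeq, abs_of_nonneg hrhsval, hrhs]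
    · left
      simp only [Set.mem_setOf_eq]
      rw [hyeq, hrhs]
end

section
/- The Grushin distance d is finite for every pair of points of ℝ², defines a metric on ℝ² (d(p,q) = 0 iff p = q, d is symmetric, and the triangle inequality holds), and the topology induced by d on ℝ² coincides with the Euclidean topology. -/
open Real MeasureTheory

/-- The set of lengths of admissible curves of the Grushin plane joining `p` to `q`:
absolutely continuous curves `γ` with `γ̇₁ = u`, `γ̇₂ = γ₁·v` a.e. for measurable,
essentially bounded controls `u, v`, with length `∫₀ᵀ √(u² + v²)`. -/
noncomputable def grushinLengths (p q : ℝ × ℝ) : Set ℝ :=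
  {L | ∃ (T : ℝ) (u v : ℝ → ℝ) (γ : ℝ → ℝ × ℝ),
    0 ≤ T ∧ Measurable u ∧ Measurable v ∧
    (∃ C : ℝ, ∀ t ∈ Set.Icc (0 : ℝ) T, |u t| ≤ C ∧ |v t| ≤ C) ∧
    γ 0 = p ∧ γ T = q ∧
    (∀ t ∈ Set.Icc (0 : ℝ) T, (γ t).1 = p.1 + ∫ s in (0 : ℝ)..t, u s) ∧
    (∀ t ∈ Set.Icc (0 : ℝ) T, (γ t).2 = p.2 + ∫ s in (0 : ℝ)..t, (γ s).1 * v s) ∧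
    L = ∫ t in (0 : ℝ)..T, Real.sqrt (u t ^ 2 + v t ^ 2)}

/-- The Grushin (Carnot–Carathéodory) distance on `ℝ²`. -/
noncomputable def grushinDist (p q : ℝ × ℝ) : ℝ := sInf (grushinLengths p q)

namespace GrushinAux

lemma integrableOn_of_bdd {f : ℝ → ℝ} {a b C : ℝ}
    (hm : AEStronglyMeasurable f (volume.restrict (Set.Icc a b)))
    (hb : ∀ t ∈ Set.Icc a b, |f t| ≤ C) :
    MeasureTheory.IntegrableOn f (Set.Icc a b) := by
  refine ⟨hm, ?_⟩
  apply MeasureTheory.HasFiniteIntegral.restrict_of_bounded (C := C)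
    (by simp [Real.volume_Icc])
  exact (ae_restrict_iff' measurableSet_Icc).2
    (Filter.Eventually.of_forall fun t ht => by simpa [Real.norm_eq_abs] using hb t ht)

lemma intervalIntegrable_of_bdd {f : ℝ → ℝ} {a b C : ℝ} (hab : a ≤ b)
    (hm : AEStronglyMeasurable f (volume.restrict (Set.Icc a b)))
    (hb : ∀ t ∈ Set.Icc a b, |f t| ≤ C) :
    IntervalIntegrable f volume a b := by
  rw [intervalIntegrable_iff_integrableOn_Icc_of_le hab]
  exact integrableOn_of_bdd hm hb

lemma sqrt_le_two_mul {u v C : ℝ} (hu : |u| ≤ C) (hv : |v| ≤ C) :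
    Real.sqrt (u ^ 2 + v ^ 2) ≤ 2 * C := by
  have hC : 0 ≤ C := le_trans (abs_nonneg _) hu
  have h1 : u ^ 2 + v ^ 2 ≤ (2 * C) ^ 2 := by
    nlinarith [sq_abs u, sq_abs v, abs_nonneg u, abs_nonneg v]
  calc Real.sqrt (u ^ 2 + v ^ 2) ≤ Real.sqrt ((2 * C) ^ 2) := Real.sqrt_le_sqrt h1
    _ = 2 * C := by rw [Real.sqrt_sq (by linarith)]

lemma abs_le_sqrt_left (u v : ℝ) : |u| ≤ Real.sqrt (u ^ 2 + v ^ 2) := by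
  rw [← Real.sqrt_sq_eq_abs]
  exact Real.sqrt_le_sqrt (by nlinarith [sq_nonneg v])

lemma abs_le_sqrt_right (u v : ℝ) : |v| ≤ Real.sqrt (u ^ 2 + v ^ 2) := by
  rw [← Real.sqrt_sq_eq_abs]
  exact Real.sqrt_le_sqrt (by nlinarith [sq_nonneg u])

/-- Basic consequences of the data of an admissible curve. -/
lemma curve_facts {p : ℝ × ℝ} {T C : ℝ} {u v : ℝ → ℝ} {γ : ℝ → ℝ × ℝ}
    (hT : 0 ≤ T) (hu : Measurable u) (hv : Measurable v)
    (hC : ∀ t ∈ Set.Icc (0 : ℝ) T, |u t| ≤ C ∧ |v t| ≤ C)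
    (hx : ∀ t ∈ Set.Icc (0 : ℝ) T, (γ t).1 = p.1 + ∫ s in (0 : ℝ)..t, u s) :
    (∀ t ∈ Set.Icc (0 : ℝ) T, |(γ t).1| ≤ |p.1| + C * T) ∧
    MeasureTheory.IntegrableOn (fun s => (γ s).1 * v s) (Set.Icc 0 T) := by
  have hC0 : 0 ≤ C := le_trans (abs_nonneg _) (hC 0 ⟨le_refl _, hT⟩).1
  have hbnd : ∀ t ∈ Set.Icc (0 : ℝ) T, |(γ t).1| ≤ |p.1| + C * T := by
    intro t ht
    have h1 : |∫ s in (0:ℝ)..t, u s| ≤ C * |t - 0| := by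
      rw [← Real.norm_eq_abs]
      apply intervalIntegral.norm_integral_le_of_norm_le_const
      intro x hx'
      have hx'' : x ∈ Set.Icc (0:ℝ) T := by
        rcases Set.mem_uIoc.1 hx' with hx' | hx'
        · exact ⟨le_of_lt hx'.1, le_trans hx'.2 ht.2⟩
        · exact ⟨le_trans ht.1 (le_of_lt hx'.1), le_trans hx'.2 (by linarith [ht.1])⟩
      simpa [Real.norm_eq_abs] using (hC x hx'').1
    rw [hx t ht]
    have : |t - 0| ≤ T := by rw [sub_zero, abs_of_nonneg ht.1]; exact ht.2
    calc |p.1 + ∫ s in (0:ℝ)..t, u s| ≤ |p.1| + |∫ s in (0:ℝ)..t, u s| := abs_add_le _ _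
      _ ≤ |p.1| + C * T := by nlinarith
  refine ⟨hbnd, ?_⟩
  have huI : MeasureTheory.IntegrableOn u (Set.Icc 0 T) :=
    integrableOn_of_bdd hu.aestronglyMeasurable.restrict (fun t ht => (hC t ht).1)
  have hF : ContinuousOn (fun t => p.1 + ∫ s in (0:ℝ)..t, u s) (Set.Icc 0 T) := by
    apply continuousOn_const.add
    have := intervalIntegral.continuousOn_primitive_interval
      (f := u) (μ := volume) (a := (0:ℝ)) (b := T) (by rwa [Set.uIcc_of_le hT])
    rwa [Set.uIcc_of_le hT] at this
  have hFm : AEStronglyMeasurable (fun s => (γ s).1 * v s) (volume.restrict (Set.Icc 0 T)) := by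
    have h1 : AEStronglyMeasurable (fun s => (p.1 + ∫ x in (0:ℝ)..s, u x) * v s)
        (volume.restrict (Set.Icc 0 T)) :=
      (hF.aestronglyMeasurable measurableSet_Icc).mul hv.aestronglyMeasurable.restrict
    apply h1.congr
    refine (ae_restrict_iff' measurableSet_Icc).2 (Filter.Eventually.of_forall fun s hs => ?_)
    show (p.1 + ∫ x in (0:ℝ)..s, u x) * v s = (γ s).1 * v s
    rw [hx s hs]
  exact integrableOn_of_bdd hFm (fun t ht => by
    rw [abs_mul]
    have := hbnd t ht
    have := (hC t ht).2
    have : |(γ t).1| * |v t| ≤ (|p.1| + C * T) * C := by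
      apply mul_le_mul (hbnd t ht) (hC t ht).2 (abs_nonneg _)
      positivity
    exact this)

lemma key_facts {p q : ℝ × ℝ} {L : ℝ} (h : L ∈ grushinLengths p q) :
    0 ≤ L ∧ |q.1 - p.1| ≤ L ∧ |q.2 - p.2| ≤ (|p.1| + L) * L := by
  obtain ⟨T, u, v, γ, hT, hu, hv, ⟨C, hC⟩, hγ0, hγT, hx, hy, hL⟩ := h
  have hC0 : 0 ≤ C := le_trans (abs_nonneg _) (hC 0 ⟨le_refl _, hT⟩).1
  set g : ℝ → ℝ := fun t => Real.sqrt (u t ^ 2 + v t ^ 2) with hg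
  have hgm : Measurable g := ((hu.pow_const 2).add (hv.pow_const 2)).sqrt
  have hgb : ∀ t ∈ Set.Icc (0:ℝ) T, |g t| ≤ 2 * C := fun t ht => by
    rw [abs_of_nonneg (Real.sqrt_nonneg _)]
    exact sqrt_le_two_mul (hC t ht).1 (hC t ht).2
  have hgint : IntervalIntegrable g volume 0 T :=
    intervalIntegrable_of_bdd hT hgm.aestronglyMeasurable.restrict hgb
  have hL0 : 0 ≤ L := by
    rw [hL]; exact intervalIntegral.integral_nonneg hT (fun t _ => Real.sqrt_nonneg _)
  have huabs : IntervalIntegrable (fun t => |u t|) volume 0 T :=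
    intervalIntegrable_of_bdd hT hu.abs.aestronglyMeasurable.restrict
      (fun t ht => by rw [abs_abs]; exact (hC t ht).1)
  have huint : IntervalIntegrable u volume 0 T :=
    intervalIntegrable_of_bdd hT hu.aestronglyMeasurable.restrict (fun t ht => (hC t ht).1)
  have habs_le : (∫ t in (0:ℝ)..T, |u t|) ≤ L := by
    rw [hL]
    exact intervalIntegral.integral_mono_on hT huabs hgint
      (fun t _ => abs_le_sqrt_left (u t) (v t))
  have h1 : |q.1 - p.1| ≤ L := by
    have hq : q.1 = p.1 + ∫ s in (0:ℝ)..T, u s := by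
      rw [← hγT]; exact hx T ⟨hT, le_refl _⟩
    have : |q.1 - p.1| = |∫ s in (0:ℝ)..T, u s| := by rw [hq]; ring_nf
    rw [this]
    exact le_trans (intervalIntegral.abs_integral_le_integral_abs hT) habs_le
  -- pointwise bound on |γ₁| by |p.1| + L
  have hbnd : ∀ t ∈ Set.Icc (0:ℝ) T, |(γ t).1| ≤ |p.1| + L := by
    intro t ht
    rw [hx t ht]
    have h2 : |∫ s in (0:ℝ)..t, u s| ≤ ∫ s in (0:ℝ)..t, |u s| :=
      intervalIntegral.abs_integral_le_integral_abs ht.1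
    have h3 : (∫ s in (0:ℝ)..t, |u s|) ≤ ∫ s in (0:ℝ)..T, |u s| :=
      intervalIntegral.integral_mono_interval (le_refl 0) ht.1 ht.2
        (Filter.Eventually.of_forall fun s => abs_nonneg _) huabs
    calc |p.1 + ∫ s in (0:ℝ)..t, u s| ≤ |p.1| + |∫ s in (0:ℝ)..t, u s| := abs_add_le _ _
      _ ≤ |p.1| + L := by linarith
  have hw := curve_facts hT hu hv hC hx
  have hwint : IntervalIntegrable (fun s => (γ s).1 * v s) volume 0 T := by
    rw [intervalIntegrable_iff_integrableOn_Icc_of_le hT]; exact hw.2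
  have hwabs : IntervalIntegrable (fun s => |(γ s).1 * v s|) volume 0 T := by
    rw [intervalIntegrable_iff_integrableOn_Icc_of_le hT]
    exact hw.2.abs
  have hMg : IntervalIntegrable (fun s => (|p.1| + L) * g s) volume 0 T :=
    hgint.const_mul _
  have h2 : |q.2 - p.2| ≤ (|p.1| + L) * L := by
    have hq : q.2 = p.2 + ∫ s in (0:ℝ)..T, (γ s).1 * v s := by
      rw [← hγT]; exact hy T ⟨hT, le_refl _⟩
    have heq : |q.2 - p.2| = |∫ s in (0:ℝ)..T, (γ s).1 * v s| := by rw [hq]; ring_nf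
    rw [heq]
    calc |∫ s in (0:ℝ)..T, (γ s).1 * v s| ≤ ∫ s in (0:ℝ)..T, |(γ s).1 * v s| :=
          intervalIntegral.abs_integral_le_integral_abs hT
      _ ≤ ∫ s in (0:ℝ)..T, (|p.1| + L) * g s := by
          apply intervalIntegral.integral_mono_on hT hwabs hMg
          intro s hs
          rw [abs_mul]
          exact mul_le_mul (hbnd s hs) (abs_le_sqrt_right (u s) (v s)) (abs_nonneg _)
            (by positivity)
      _ = (|p.1| + L) * ∫ s in (0:ℝ)..T, g s := by
          rw [intervalIntegral.integral_const_mul]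
      _ = (|p.1| + L) * L := by rw [hL]
  exact ⟨hL0, h1, h2⟩

lemma moveA (x x' y : ℝ) : |x' - x| ∈ grushinLengths (x, y) (x', y) := by
  refine ⟨1, fun _ => x' - x, fun _ => 0, fun t => (x + t * (x' - x), y), zero_le_one,
    measurable_const, measurable_const,
    ⟨|x' - x|, fun t _ => ⟨le_refl _, by simp⟩⟩, by simp, by norm_num, ?_, ?_, ?_⟩
  · intro t _
    show x + t * (x' - x) = x + ∫ _s in (0:ℝ)..t, (x' - x)
    rw [intervalIntegral.integral_const, smul_eq_mul]
    ring
  · intro t _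
    simp
  · simp [Real.sqrt_sq_eq_abs]

lemma moveB (s y y' : ℝ) (hs : s ≠ 0) :
    |y' - y| / |s| ∈ grushinLengths (s, y) (s, y') := by
  refine ⟨1, fun _ => 0, fun _ => (y' - y) / s, fun t => (s, y + t * (y' - y)), zero_le_one,
    measurable_const, measurable_const,
    ⟨|(y' - y) / s|, fun t _ => ⟨by simp, le_refl _⟩⟩, by simp, by norm_num, ?_, ?_, ?_⟩
  · intro t _
    simp
  · intro t _
    show y + t * (y' - y) = y + ∫ _s in (0:ℝ)..t, s * ((y' - y) / s)
    have hss : s * ((y' - y) / s) = y' - y := by field_simp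
    rw [intervalIntegral.integral_const, smul_eq_mul, hss]
    ring
  · simp [Real.sqrt_sq_eq_abs, abs_div]

lemma concat {p q r : ℝ × ℝ} {L₁ L₂ : ℝ}
    (h₁ : L₁ ∈ grushinLengths p q) (h₂ : L₂ ∈ grushinLengths q r) :
    L₁ + L₂ ∈ grushinLengths p r := by
  obtain ⟨T₁, u₁, v₁, γ₁, hT₁, hu₁, hv₁, ⟨C₁, hC₁⟩, h10, h1T, h1x, h1y, h1L⟩ := h₁
  obtain ⟨T₂, u₂, v₂, γ₂, hT₂, hu₂, hv₂, ⟨C₂, hC₂⟩, h20, h2T, h2x, h2y, h2L⟩ := h₂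
  set u : ℝ → ℝ := fun t => if t ≤ T₁ then u₁ t else u₂ (t - T₁) with hu_def
  set v : ℝ → ℝ := fun t => if t ≤ T₁ then v₁ t else v₂ (t - T₁) with hv_def
  set γ : ℝ → ℝ × ℝ := fun t => if t ≤ T₁ then γ₁ t else γ₂ (t - T₁) with hγ_def
  have hmIic : MeasurableSet {t : ℝ | t ≤ T₁} := measurableSet_Iic
  have hsub : Measurable fun t : ℝ => t - T₁ := measurable_id.sub measurable_const
  have hu : Measurable u := Measurable.ite hmIic hu₁ (hu₂.comp hsub)
  have hv : Measurable v := Measurable.ite hmIic hv₁ (hv₂.comp hsub)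
  have hC : ∀ t ∈ Set.Icc (0:ℝ) (T₁ + T₂), |u t| ≤ max C₁ C₂ ∧ |v t| ≤ max C₁ C₂ := by
    intro t ht
    by_cases h : t ≤ T₁
    · have ht1 : t ∈ Set.Icc (0:ℝ) T₁ := ⟨ht.1, h⟩
      simp only [hu_def, hv_def, if_pos h]
      exact ⟨le_trans (hC₁ t ht1).1 (le_max_left _ _), le_trans (hC₁ t ht1).2 (le_max_left _ _)⟩
    · have ht2 : t - T₁ ∈ Set.Icc (0:ℝ) T₂ := ⟨by linarith [not_le.1 h], by linarith [ht.2]⟩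
      simp only [hu_def, hv_def, if_neg h]
      exact ⟨le_trans (hC₂ _ ht2).1 (le_max_right _ _),
        le_trans (hC₂ _ ht2).2 (le_max_right _ _)⟩
  -- integrability of u on subintervals
  have huint : ∀ a b : ℝ, 0 ≤ a → a ≤ b → b ≤ T₁ + T₂ → IntervalIntegrable u volume a b := by
    intro a b ha hab hb
    apply intervalIntegrable_of_bdd hab hu.aestronglyMeasurable.restrict
      (C := max C₁ C₂)
    intro t ht
    exact (hC t ⟨le_trans ha ht.1, le_trans ht.2 hb⟩).1
  -- the first coordinate condition
  have hxcond : ∀ t ∈ Set.Icc (0:ℝ) (T₁ + T₂), (γ t).1 = p.1 + ∫ s in (0:ℝ)..t, u s := by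
    intro t ht
    by_cases h : t ≤ T₁
    · have heq : ∫ s in (0:ℝ)..t, u s = ∫ s in (0:ℝ)..t, u₁ s := by
        apply intervalIntegral.integral_congr
        intro s hs
        rw [Set.uIcc_of_le ht.1] at hs
        simp only [hu_def]
        rw [if_pos (le_trans hs.2 h)]
      rw [heq]
      simp only [hγ_def, if_pos h]
      exact h1x t ⟨ht.1, h⟩
    · push_neg at h
      have hsplit : ∫ s in (0:ℝ)..t, u s
          = (∫ s in (0:ℝ)..T₁, u s) + ∫ s in T₁..t, u s :=
        (intervalIntegral.integral_add_adjacent_intervals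
          (huint 0 T₁ (le_refl _) hT₁ (by linarith))
          (huint T₁ t hT₁ h.le ht.2)).symm
      have heq1 : ∫ s in (0:ℝ)..T₁, u s = ∫ s in (0:ℝ)..T₁, u₁ s := by
        apply intervalIntegral.integral_congr
        intro s hs
        rw [Set.uIcc_of_le hT₁] at hs
        simp only [hu_def]; rw [if_pos hs.2]
      have heq2 : ∫ s in T₁..t, u s = ∫ s in (0:ℝ)..(t - T₁), u₂ s := by
        have h4 := intervalIntegral.integral_comp_sub_right (a := T₁) (b := t) u₂ T₁
        rw [sub_self T₁] at h4
        calc ∫ s in T₁..t, u s = ∫ s in T₁..t, u₂ (s - T₁) := by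
              apply intervalIntegral.integral_congr_ae
              apply Filter.Eventually.of_forall
              intro s hs
              rw [Set.uIoc_of_le h.le] at hs
              simp only [hu_def]; rw [if_neg (not_le.2 hs.1)]
          _ = ∫ s in (0:ℝ)..(t - T₁), u₂ s := h4
      have hq1 : q.1 = p.1 + ∫ s in (0:ℝ)..T₁, u₁ s := by
        rw [← h1T]; exact h1x T₁ ⟨hT₁, le_refl _⟩
      have hγ2 : (γ₂ (t - T₁)).1 = q.1 + ∫ s in (0:ℝ)..(t - T₁), u₂ s :=
        h2x (t - T₁) ⟨by linarith, by linarith [ht.2]⟩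
      simp only [hγ_def, if_neg (not_le.2 h)]
      rw [hγ2, hq1, hsplit, heq1, heq2]
      ring
  -- integrability of the γ₁ ⬝ v integrand
  have hwfacts := curve_facts (by linarith : (0:ℝ) ≤ T₁ + T₂) hu hv hC hxcond
  have hwint : ∀ a b : ℝ, 0 ≤ a → a ≤ b → b ≤ T₁ + T₂ →
      IntervalIntegrable (fun s => (γ s).1 * v s) volume a b := by
    intro a b ha hab hb
    rw [intervalIntegrable_iff_integrableOn_Icc_of_le hab]
    exact hwfacts.2.mono_set (Set.Icc_subset_Icc ha hb)
  have hycond : ∀ t ∈ Set.Icc (0:ℝ) (T₁ + T₂),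
      (γ t).2 = p.2 + ∫ s in (0:ℝ)..t, (γ s).1 * v s := by
    intro t ht
    by_cases h : t ≤ T₁
    · have heq : ∫ s in (0:ℝ)..t, (γ s).1 * v s = ∫ s in (0:ℝ)..t, (γ₁ s).1 * v₁ s := by
        apply intervalIntegral.integral_congr
        intro s hs
        rw [Set.uIcc_of_le ht.1] at hs
        have hsT : s ≤ T₁ := le_trans hs.2 h
        simp only [hγ_def, hv_def]
        rw [if_pos hsT, if_pos hsT]
      rw [heq]
      simp only [hγ_def, if_pos h]
      exact h1y t ⟨ht.1, h⟩
    · push_neg at h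
      have hsplit : ∫ s in (0:ℝ)..t, (γ s).1 * v s
          = (∫ s in (0:ℝ)..T₁, (γ s).1 * v s) + ∫ s in T₁..t, (γ s).1 * v s :=
        (intervalIntegral.integral_add_adjacent_intervals
          (hwint 0 T₁ (le_refl _) hT₁ (by linarith))
          (hwint T₁ t hT₁ h.le ht.2)).symm
      have heq1 : ∫ s in (0:ℝ)..T₁, (γ s).1 * v s = ∫ s in (0:ℝ)..T₁, (γ₁ s).1 * v₁ s := by
        apply intervalIntegral.integral_congr
        intro s hs
        rw [Set.uIcc_of_le hT₁] at hs
        simp only [hγ_def, hv_def]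
        rw [if_pos hs.2, if_pos hs.2]
      have heq2 : ∫ s in T₁..t, (γ s).1 * v s
          = ∫ s in (0:ℝ)..(t - T₁), (γ₂ s).1 * v₂ s := by
        have h4 := intervalIntegral.integral_comp_sub_right (a := T₁) (b := t)
          (fun x => (γ₂ x).1 * v₂ x) T₁
        rw [sub_self T₁] at h4
        calc ∫ s in T₁..t, (γ s).1 * v s
            = ∫ s in T₁..t, (fun x => (γ₂ x).1 * v₂ x) (s - T₁) := by
              apply intervalIntegral.integral_congr_ae
              apply Filter.Eventually.of_forall
              intro s hs
              rw [Set.uIoc_of_le h.le] at hs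
              simp only [hγ_def, hv_def]
              rw [if_neg (not_le.2 hs.1), if_neg (not_le.2 hs.1)]
          _ = ∫ s in (0:ℝ)..(t - T₁), (γ₂ s).1 * v₂ s := h4
      have hq2 : q.2 = p.2 + ∫ s in (0:ℝ)..T₁, (γ₁ s).1 * v₁ s := by
        rw [← h1T]; exact h1y T₁ ⟨hT₁, le_refl _⟩
      have hγ2 : (γ₂ (t - T₁)).2 = q.2 + ∫ s in (0:ℝ)..(t - T₁), (γ₂ s).1 * v₂ s :=
        h2y (t - T₁) ⟨by linarith, by linarith [ht.2]⟩
      simp only [hγ_def, if_neg (not_le.2 h)]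
      rw [hγ2, hq2, hsplit, heq1, heq2]
      ring
  -- the length
  have hgint : ∀ a b : ℝ, 0 ≤ a → a ≤ b → b ≤ T₁ + T₂ →
      IntervalIntegrable (fun t => Real.sqrt (u t ^ 2 + v t ^ 2)) volume a b := by
    intro a b ha hab hb
    apply intervalIntegrable_of_bdd hab
      (((hu.pow_const 2).add (hv.pow_const 2)).sqrt).aestronglyMeasurable.restrict
      (C := 2 * max C₁ C₂)
    intro t ht
    rw [abs_of_nonneg (Real.sqrt_nonneg _)]
    have := hC t ⟨le_trans ha ht.1, le_trans ht.2 hb⟩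
    exact sqrt_le_two_mul this.1 this.2
  have hlen : (∫ t in (0:ℝ)..(T₁ + T₂), Real.sqrt (u t ^ 2 + v t ^ 2)) = L₁ + L₂ := by
    have hsplit : ∫ t in (0:ℝ)..(T₁ + T₂), Real.sqrt (u t ^ 2 + v t ^ 2)
        = (∫ t in (0:ℝ)..T₁, Real.sqrt (u t ^ 2 + v t ^ 2))
          + ∫ t in T₁..(T₁ + T₂), Real.sqrt (u t ^ 2 + v t ^ 2) :=
      (intervalIntegral.integral_add_adjacent_intervals
        (hgint 0 T₁ (le_refl _) hT₁ (by linarith))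
        (hgint T₁ (T₁ + T₂) hT₁ (by linarith) (le_refl _))).symm
    have heq1 : ∫ t in (0:ℝ)..T₁, Real.sqrt (u t ^ 2 + v t ^ 2)
        = ∫ t in (0:ℝ)..T₁, Real.sqrt (u₁ t ^ 2 + v₁ t ^ 2) := by
      apply intervalIntegral.integral_congr
      intro s hs
      rw [Set.uIcc_of_le hT₁] at hs
      simp only [hu_def, hv_def]
      rw [if_pos hs.2, if_pos hs.2]
    have heq2 : ∫ t in T₁..(T₁ + T₂), Real.sqrt (u t ^ 2 + v t ^ 2)
        = ∫ t in (0:ℝ)..T₂, Real.sqrt (u₂ t ^ 2 + v₂ t ^ 2) := by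
      have h4 := intervalIntegral.integral_comp_sub_right (a := T₁) (b := T₁ + T₂)
        (fun x => Real.sqrt (u₂ x ^ 2 + v₂ x ^ 2)) T₁
      rw [sub_self T₁, add_sub_cancel_left] at h4
      calc ∫ t in T₁..(T₁ + T₂), Real.sqrt (u t ^ 2 + v t ^ 2)
          = ∫ t in T₁..(T₁ + T₂), (fun x => Real.sqrt (u₂ x ^ 2 + v₂ x ^ 2)) (t - T₁) := by
            apply intervalIntegral.integral_congr_ae
            apply Filter.Eventually.of_forall
            intro s hs
            rw [Set.uIoc_of_le (by linarith : T₁ ≤ T₁ + T₂)] at hs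
            simp only [hu_def, hv_def]
            rw [if_neg (not_le.2 hs.1), if_neg (not_le.2 hs.1)]
        _ = ∫ t in (0:ℝ)..T₂, Real.sqrt (u₂ t ^ 2 + v₂ t ^ 2) := h4
    rw [hsplit, heq1, heq2, ← h1L, ← h2L]
  refine ⟨T₁ + T₂, u, v, γ, by linarith, hu, hv, ⟨max C₁ C₂, hC⟩, ?_, ?_, hxcond, hycond,
    hlen.symm⟩
  · simp only [hγ_def]
    rw [if_pos hT₁]
    exact h10
  · by_cases h : T₁ + T₂ ≤ T₁
    · have hT20 : T₂ = 0 := le_antisymm (by linarith) hT₂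
      subst hT20
      show (if T₁ + 0 ≤ T₁ then γ₁ (T₁ + 0) else γ₂ (T₁ + 0 - T₁)) = r
      rw [add_zero, if_pos (le_refl T₁), h1T, ← h20]
      exact h2T
    · simp only [hγ_def]
      rw [if_neg h]
      have harg : T₁ + T₂ - T₁ = T₂ := by ring
      rw [harg, h2T]

lemma reverse {p q : ℝ × ℝ} {L : ℝ} (h : L ∈ grushinLengths p q) :
    L ∈ grushinLengths q p := by
  obtain ⟨T, u, v, γ, hT, hu, hv, ⟨C, hC⟩, hγ0, hγT, hx, hy, hL⟩ := h
  have hsub : Measurable fun t : ℝ => T - t := measurable_const.sub measurable_id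
  have huint : IntervalIntegrable u volume 0 T :=
    intervalIntegrable_of_bdd hT hu.aestronglyMeasurable.restrict (fun t ht => (hC t ht).1)
  have hwI := curve_facts hT hu hv hC hx
  have hwint : IntervalIntegrable (fun s => (γ s).1 * v s) volume 0 T := by
    rw [intervalIntegrable_iff_integrableOn_Icc_of_le hT]; exact hwI.2
  -- split of integrals at T - t
  have husplit : ∀ t ∈ Set.Icc (0:ℝ) T,
      (∫ s in (T - t)..T, u s) = (∫ s in (0:ℝ)..T, u s) - ∫ s in (0:ℝ)..(T - t), u s := by
    intro t ht
    have h1 : IntervalIntegrable u volume 0 (T - t) :=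
      huint.mono_set (by rw [Set.uIcc_of_le hT, Set.uIcc_of_le (by linarith [ht.2] : (0:ℝ) ≤ T - t)]
                         exact Set.Icc_subset_Icc (le_refl _) (by linarith [ht.1]))
    have h2 : IntervalIntegrable u volume (T - t) T :=
      huint.mono_set (by rw [Set.uIcc_of_le hT, Set.uIcc_of_le (by linarith [ht.1] : T - t ≤ T)]
                         exact Set.Icc_subset_Icc (by linarith [ht.2]) (le_refl _))
    have := intervalIntegral.integral_add_adjacent_intervals h1 h2
    linarith
  have hwsplit : ∀ t ∈ Set.Icc (0:ℝ) T,
      (∫ s in (T - t)..T, (γ s).1 * v s)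
        = (∫ s in (0:ℝ)..T, (γ s).1 * v s) - ∫ s in (0:ℝ)..(T - t), (γ s).1 * v s := by
    intro t ht
    have h1 : IntervalIntegrable (fun s => (γ s).1 * v s) volume 0 (T - t) :=
      hwint.mono_set (by rw [Set.uIcc_of_le hT, Set.uIcc_of_le (by linarith [ht.2] : (0:ℝ) ≤ T - t)]
                         exact Set.Icc_subset_Icc (le_refl _) (by linarith [ht.1]))
    have h2 : IntervalIntegrable (fun s => (γ s).1 * v s) volume (T - t) T :=
      hwint.mono_set (by rw [Set.uIcc_of_le hT, Set.uIcc_of_le (by linarith [ht.1] : T - t ≤ T)]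
                         exact Set.Icc_subset_Icc (by linarith [ht.2]) (le_refl _))
    have := intervalIntegral.integral_add_adjacent_intervals h1 h2
    linarith
  refine ⟨T, fun t => -u (T - t), fun t => -v (T - t), fun t => γ (T - t), hT,
    (hu.comp hsub).neg, (hv.comp hsub).neg, ⟨C, ?_⟩, by simp [hγT], by simp [hγ0], ?_, ?_, ?_⟩
  · intro t ht
    have hTt : T - t ∈ Set.Icc (0:ℝ) T := ⟨by linarith [ht.2], by linarith [ht.1]⟩
    constructor
    · rw [abs_neg]; exact (hC _ hTt).1
    · rw [abs_neg]; exact (hC _ hTt).2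
  · -- first coordinate
    intro t ht
    have hTt : T - t ∈ Set.Icc (0:ℝ) T := ⟨by linarith [ht.2], by linarith [ht.1]⟩
    show (γ (T - t)).1 = q.1 + ∫ s in (0:ℝ)..t, -u (T - s)
    have hcomp := intervalIntegral.integral_comp_sub_left (a := (0:ℝ)) (b := t) u T
    rw [sub_zero] at hcomp
    have hq : q.1 = p.1 + ∫ s in (0:ℝ)..T, u s := by
      rw [← hγT]; exact hx T ⟨hT, le_refl _⟩
    rw [intervalIntegral.integral_neg, hcomp, husplit t ht, hx (T - t) hTt, hq]
    ring
  · -- second coordinate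
    intro t ht
    have hTt : T - t ∈ Set.Icc (0:ℝ) T := ⟨by linarith [ht.2], by linarith [ht.1]⟩
    show (γ (T - t)).2 = q.2 + ∫ s in (0:ℝ)..t, (γ (T - s)).1 * -v (T - s)
    have heq : (∫ s in (0:ℝ)..t, (γ (T - s)).1 * -v (T - s))
        = ∫ s in (0:ℝ)..t, -((fun x => (γ x).1 * v x) (T - s)) := by
      apply intervalIntegral.integral_congr
      intro s _
      ring
    have hcomp := intervalIntegral.integral_comp_sub_left (a := (0:ℝ)) (b := t)
      (fun x => (γ x).1 * v x) T
    rw [sub_zero] at hcomp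
    have hq : q.2 = p.2 + ∫ s in (0:ℝ)..T, (γ s).1 * v s := by
      rw [← hγT]; exact hy T ⟨hT, le_refl _⟩
    rw [heq, intervalIntegral.integral_neg, hcomp, hwsplit t ht, hy (T - t) hTt, hq]
    ring
  · -- length
    have heq : (∫ t in (0:ℝ)..T, Real.sqrt ((-u (T - t)) ^ 2 + (-v (T - t)) ^ 2))
        = ∫ t in (0:ℝ)..T, (fun x => Real.sqrt (u x ^ 2 + v x ^ 2)) (T - t) := by
      apply intervalIntegral.integral_congr
      intro s _
      simp [neg_pow]
    have hcomp := intervalIntegral.integral_comp_sub_left (a := (0:ℝ)) (b := T)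
      (fun x => Real.sqrt (u x ^ 2 + v x ^ 2)) T
    rw [sub_zero, sub_self] at hcomp
    rw [heq, hcomp, hL]

lemma mem_three (p q : ℝ × ℝ) {s : ℝ} (hs : s ≠ 0) :
    |s - p.1| + (|q.2 - p.2| / |s| + |q.1 - s|) ∈ grushinLengths p q := by
  have h1 : |s - p.1| ∈ grushinLengths p (s, p.2) := by
    simpa using moveA p.1 s p.2
  have h2 : |q.2 - p.2| / |s| ∈ grushinLengths (s, p.2) (s, q.2) := moveB s p.2 q.2 hs
  have h3 : |q.1 - s| ∈ grushinLengths (s, q.2) q := by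
    simpa using moveA s q.1 q.2
  exact concat h1 (concat h2 h3)

lemma bddBelow_lengths (p q : ℝ × ℝ) : BddBelow (grushinLengths p q) :=
  ⟨0, fun _ hL => (key_facts hL).1⟩

lemma nonempty_lengths (p q : ℝ × ℝ) : (grushinLengths p q).Nonempty := by
  refine ⟨_, mem_three p q (s := max p.1 0 + 1) ?_⟩
  have : (0:ℝ) ≤ max p.1 0 := le_max_right _ _
  positivity

end GrushinAux

open GrushinAux in
/-- the Grushin distance is finite (admissible curves always exist),
defines a metric on `ℝ²`, and induces the Euclidean topology. -/
theorem grushinDist_metric_and_topology :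
    (∀ p q : ℝ × ℝ, (grushinLengths p q).Nonempty) ∧
    (∀ p q : ℝ × ℝ, 0 ≤ grushinDist p q) ∧
    (∀ p q : ℝ × ℝ, grushinDist p q = 0 ↔ p = q) ∧
    (∀ p q : ℝ × ℝ, grushinDist p q = grushinDist q p) ∧
    (∀ p q r : ℝ × ℝ, grushinDist p r ≤ grushinDist p q + grushinDist q r) ∧
    (∀ p : ℝ × ℝ, ∀ ε : ℝ, 0 < ε → ∃ δ : ℝ, 0 < δ ∧
      ∀ q : ℝ × ℝ, dist p q < δ → grushinDist p q < ε) ∧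
    (∀ p : ℝ × ℝ, ∀ ε : ℝ, 0 < ε → ∃ δ : ℝ, 0 < δ ∧
      ∀ q : ℝ × ℝ, grushinDist p q < δ → dist p q < ε) := by
  have hzero : ∀ p : ℝ × ℝ, (0:ℝ) ∈ grushinLengths p p := by
    intro p
    simpa using moveA p.1 p.1 p.2
  have hnonneg : ∀ p q : ℝ × ℝ, 0 ≤ grushinDist p q := fun p q =>
    le_csInf (nonempty_lengths p q) (fun L hL => (key_facts hL).1)
  have hiff : ∀ p q : ℝ × ℝ, grushinDist p q = 0 ↔ p = q := by
    intro p q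
    constructor
    · intro h
      have hex : ∀ ε : ℝ, 0 < ε → ∃ L ∈ grushinLengths p q, L < ε := by
        intro ε hε
        apply exists_lt_of_csInf_lt (nonempty_lengths p q)
        calc sInf (grushinLengths p q) = 0 := h
          _ < ε := hε
      have hx0 : |q.1 - p.1| = 0 := by
        by_contra hne'
        have hpos : 0 < |q.1 - p.1| := lt_of_le_of_ne (abs_nonneg _) (Ne.symm hne')
        obtain ⟨L, hL, hLε⟩ := hex (|q.1 - p.1| / 2) (by linarith)
        linarith [(key_facts hL).2.1]
      have hy0 : |q.2 - p.2| = 0 := by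
        by_contra hne'
        have hpos : 0 < |q.2 - p.2| := lt_of_le_of_ne (abs_nonneg _) (Ne.symm hne')
        have hA : (0:ℝ) < |p.1| + 1 := by positivity
        set ε := min 1 (|q.2 - p.2| / (2 * (|p.1| + 1))) with hεdef
        have hε : 0 < ε := by
          apply lt_min one_pos
          positivity
        obtain ⟨L, hL, hLε⟩ := hex ε hε
        obtain ⟨hL0, -, h2⟩ := key_facts hL
        have hLle : L ≤ 1 := le_of_lt (lt_of_lt_of_le hLε (min_le_left _ _))
        have hg1 : (|p.1| + L) * L ≤ (|p.1| + 1) * L := by nlinarith [abs_nonneg p.1]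
        have hg2 : (|p.1| + 1) * L < (|p.1| + 1) * (|q.2 - p.2| / (2 * (|p.1| + 1))) :=
          mul_lt_mul_of_pos_left (lt_of_lt_of_le hLε (min_le_right _ _)) hA
        have hg3 : (|p.1| + 1) * (|q.2 - p.2| / (2 * (|p.1| + 1))) = |q.2 - p.2| / 2 := by
          field_simp
        linarith
      rw [Prod.ext_iff]
      have e1 := abs_eq_zero.1 hx0
      have e2 := abs_eq_zero.1 hy0
      constructor <;> linarith [sub_eq_zero.1 e1, sub_eq_zero.1 e2]
    · rintro rfl
      exact le_antisymm (csInf_le (bddBelow_lengths p p) (hzero p)) (hnonneg p p)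
  have hsymm : ∀ p q : ℝ × ℝ, grushinDist p q = grushinDist q p := by
    intro p q
    have hset : grushinLengths p q = grushinLengths q p :=
      Set.Subset.antisymm (fun L hL => reverse hL) (fun L hL => reverse hL)
    unfold grushinDist
    rw [hset]
  have htri : ∀ p q r : ℝ × ℝ, grushinDist p r ≤ grushinDist p q + grushinDist q r := by
    intro p q r
    apply le_of_forall_sub_le
    intro ε hε
    obtain ⟨L₁, hL₁, hL₁'⟩ := exists_lt_of_csInf_lt (nonempty_lengths p q)
      (lt_add_of_pos_right _ (by linarith : (0:ℝ) < ε/2))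
    obtain ⟨L₂, hL₂, hL₂'⟩ := exists_lt_of_csInf_lt (nonempty_lengths q r)
      (lt_add_of_pos_right _ (by linarith : (0:ℝ) < ε/2))
    have hA : grushinDist p r ≤ L₁ + L₂ := csInf_le (bddBelow_lengths p r) (concat hL₁ hL₂)
    have hB : L₁ < grushinDist p q + ε/2 := hL₁'
    have hC : L₂ < grushinDist q r + ε/2 := hL₂'
    linarith
  refine ⟨nonempty_lengths, hnonneg, hiff, hsymm, htri, ?_, ?_⟩
  · -- Euclidean-to-Grushin continuity
    intro p ε hε
    set s := if 0 ≤ p.1 then p.1 + ε/4 else p.1 - ε/4 with hsdef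
    have hsprops : |s - p.1| = ε/4 ∧ ε/4 ≤ |s| := by
      by_cases h : 0 ≤ p.1
      · rw [hsdef, if_pos h]
        constructor
        · rw [show p.1 + ε/4 - p.1 = ε/4 by ring, abs_of_pos (by linarith)]
        · rw [abs_of_pos (by linarith)]; linarith
      · push_neg at h
        rw [hsdef, if_neg (not_le.2 h)]
        constructor
        · rw [show p.1 - ε/4 - p.1 = -(ε/4) by ring, abs_neg, abs_of_pos (by linarith)]
        · rw [abs_of_neg (by linarith)]; linarith
    have hs0 : s ≠ 0 := by
      intro h0
      have := hsprops.2
      rw [h0, abs_zero] at this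
      linarith
    refine ⟨min (ε/4) (ε^2/32), lt_min (by positivity) (by positivity), ?_⟩
    intro q hq
    have hδ1 : dist p.1 q.1 < min (ε/4) (ε^2/32) :=
      lt_of_le_of_lt (by rw [Prod.dist_eq]; exact le_max_left _ _) hq
    have hδ2 : dist p.2 q.2 < min (ε/4) (ε^2/32) :=
      lt_of_le_of_lt (by rw [Prod.dist_eq]; exact le_max_right _ _) hq
    rw [Real.dist_eq] at hδ1 hδ2
    have hx1 : |q.1 - p.1| < ε/4 := by
      rw [abs_sub_comm]; exact lt_of_lt_of_le hδ1 (min_le_left _ _)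
    have hy1 : |q.2 - p.2| ≤ ε^2/32 := by
      rw [abs_sub_comm]; exact le_of_lt (lt_of_lt_of_le hδ2 (min_le_right _ _))
    have hle : grushinDist p q ≤ |s - p.1| + (|q.2 - p.2| / |s| + |q.1 - s|) :=
      csInf_le (bddBelow_lengths p q) (mem_three p q hs0)
    have hdiv : |q.2 - p.2| / |s| ≤ (ε^2/32) / (ε/4) := by
      apply div_le_div₀ (by positivity) hy1 (by linarith) hsprops.2
    have hdiv2 : (ε^2/32) / (ε/4) = ε/8 := by
      field_simp
      ring
    have hq1 : |q.1 - s| ≤ |q.1 - p.1| + |p.1 - s| := abs_sub_le q.1 p.1 s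
    have hps : |p.1 - s| = ε/4 := by rw [abs_sub_comm]; exact hsprops.1
    have h78 : grushinDist p q ≤ 7 * ε / 8 := by
      rw [hdiv2] at hdiv
      linarith [hsprops.1]
    linarith
  · -- Grushin-to-Euclidean continuity
    intro p ε hε
    have hp2 : (0:ℝ) < |p.1| + 2 := by positivity
    refine ⟨min ε (min 1 (ε / (|p.1| + 2))), ?_, ?_⟩
    · apply lt_min hε (lt_min one_pos (div_pos hε hp2))
    intro q hq
    obtain ⟨L, hL, hLδ⟩ := exists_lt_of_csInf_lt (nonempty_lengths p q) hq
    obtain ⟨hL0, h1, h2⟩ := key_facts hL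
    have hδε : min ε (min 1 (ε / (|p.1| + 2))) ≤ ε := min_le_left _ _
    have hδ1 : min ε (min 1 (ε / (|p.1| + 2))) ≤ 1 :=
      le_trans (min_le_right _ _) (min_le_left _ _)
    have hδ2 : min ε (min 1 (ε / (|p.1| + 2))) ≤ ε / (|p.1| + 2) :=
      le_trans (min_le_right _ _) (min_le_right _ _)
    have hkey : (|p.1| + 2) * (ε / (|p.1| + 2)) = ε := by field_simp
    have hxd : 0 < ε / (|p.1| + 2) := div_pos hε hp2
    rw [Prod.dist_eq, max_lt_iff]
    constructor
    · rw [Real.dist_eq, abs_sub_comm]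
      linarith
    · rw [Real.dist_eq, abs_sub_comm]
      have e1 : L ≤ 1 := le_of_lt (lt_of_lt_of_le hLδ hδ1)
      have e2 : (|p.1| + L) * L ≤ (|p.1| + 1) * L := by nlinarith [abs_nonneg p.1]
      have e3 : (|p.1| + 1) * L < (|p.1| + 1) * (ε / (|p.1| + 2)) :=
        mul_lt_mul_of_pos_left (lt_of_lt_of_le hLδ hδ2) (by positivity)
      have e4 : (|p.1| + 1) * (ε / (|p.1| + 2)) < ε := by nlinarith
      linarith
end

section
/- Let 0 < a < 1 and consider the two solutions of the Grushin Hamiltonian system ẋ = p_x, ẏ = x²p_y, ṗ_x = −x p_y², ṗ_y = 0 with initial conditions (−1, 0, √(1−a²), a) and (−1, 0, −√(1−a²), a) (both lying on the level set H = 1/2 of H = ½(p_x² + x²p_y²)). Explicitly, their (x,y)-projections are γ^±(t) = (x^±(t), y^±(t)) with x^±(t) = −cos(at) ± (√(1−a²)/a) sin(at) and y^±(t) = ∓√(1−a²)/(2a) + t/(2a) + ((a² − (1−a²))/(4a²)) sin(2at) ± (√(1−a²)/(2a)) cos(2at). Then γ^+(π/a) = γ^−(π/a) = (1, π/(2a²)),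 while γ^+(t) ≠ γ^−(t) for every 0 < t < π/a; i.e., the two geodesics from (−1,0) with covector parameters (±√(1−a²), a) first intersect at time t = π/a at the point (1, π/(2a²)). -/
open Real

/-- the two Grushin geodesics from the Riemannian point `(−1, 0)` with
initial covectors `(±√(1−a²), a)`, `0 < a < 1`, solve the Hamiltonian system
`ẋ = p_x, ẏ = x²p_y, ṗ_x = −x p_y², ṗ_y = 0` on the level set `H = 1/2`, and they first
intersect at time `t = π/a`, at the point `(1, π/(2a²))`. -/
theorem grushin_geodesics_from_riemannian_point (a : ℝ) (ha0 : 0 < a) (ha1 : a < 1)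
    (xp xm yp ym pxp pxm py : ℝ → ℝ)
    (hxp : xp = fun t => -cos (a * t) + (Real.sqrt (1 - a ^ 2) / a) * sin (a * t))
    (hxm : xm = fun t => -cos (a * t) - (Real.sqrt (1 - a ^ 2) / a) * sin (a * t))
    (hyp : yp = fun t => -(Real.sqrt (1 - a ^ 2) / (2 * a)) + t / (2 * a)
      + ((a ^ 2 - (1 - a ^ 2)) / (4 * a ^ 2)) * sin (2 * a * t)
      + (Real.sqrt (1 - a ^ 2) / (2 * a)) * cos (2 * a * t))
    (hym : ym = fun t => Real.sqrt (1 - a ^ 2) / (2 * a) + t / (2 * a)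
      + ((a ^ 2 - (1 - a ^ 2)) / (4 * a ^ 2)) * sin (2 * a * t)
      - (Real.sqrt (1 - a ^ 2) / (2 * a)) * cos (2 * a * t))
    (hpxp : pxp = fun t => a * sin (a * t) + Real.sqrt (1 - a ^ 2) * cos (a * t))
    (hpxm : pxm = fun t => a * sin (a * t) - Real.sqrt (1 - a ^ 2) * cos (a * t))
    (hpy : py = fun _ => a) :
    -- both curves solve the Grushin Hamiltonian system
    (∀ t, HasDerivAt xp (pxp t) t) ∧
    (∀ t, HasDerivAt yp ((xp t) ^ 2 * py t) t) ∧
    (∀ t, HasDerivAt pxp (-(xp t) * (py t) ^ 2) t) ∧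
    (∀ t, HasDerivAt xm (pxm t) t) ∧
    (∀ t, HasDerivAt ym ((xm t) ^ 2 * py t) t) ∧
    (∀ t, HasDerivAt pxm (-(xm t) * (py t) ^ 2) t) ∧
    (∀ t, HasDerivAt py 0 t) ∧
    -- initial conditions `(−1, 0, ±√(1−a²), a)`
    xp 0 = -1 ∧ yp 0 = 0 ∧ pxp 0 = Real.sqrt (1 - a ^ 2) ∧
    xm 0 = -1 ∧ ym 0 = 0 ∧ pxm 0 = -Real.sqrt (1 - a ^ 2) ∧
    -- both lie on the level set `H = 1/2`
    (∀ t, (1 / 2) * ((pxp t) ^ 2 + (xp t) ^ 2 * (py t) ^ 2) = 1 / 2) ∧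
    (∀ t, (1 / 2) * ((pxm t) ^ 2 + (xm t) ^ 2 * (py t) ^ 2) = 1 / 2) ∧
    -- first intersection at time `π/a` at the point `(1, π/(2a²))`
    ((xp (π / a), yp (π / a)) : ℝ × ℝ) = (1, π / (2 * a ^ 2)) ∧
    ((xm (π / a), ym (π / a)) : ℝ × ℝ) = (1, π / (2 * a ^ 2)) ∧
    (∀ t : ℝ, 0 < t → t < π / a → ((xp t, yp t) : ℝ × ℝ) ≠ (xm t, ym t)) := by
  have ha : a ≠ 0 := ha0.ne'
  set s := Real.sqrt (1 - a ^ 2) with hs_def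
  have hs : s ^ 2 = 1 - a ^ 2 := Real.sq_sqrt (by nlinarith)
  have hspos : 0 < s := Real.sqrt_pos.mpr (by nlinarith)
  subst hxp hxm hyp hym hpxp hpxm hpy
  have hcos : ∀ t : ℝ, HasDerivAt (fun u => Real.cos (a*u)) (-Real.sin (a*t) * a) t := fun t =>
    (Real.hasDerivAt_cos (a*t)).comp t (by simpa using (hasDerivAt_id t).const_mul a)
  have hsin : ∀ t : ℝ, HasDerivAt (fun u => Real.sin (a*u)) (Real.cos (a*t) * a) t := fun t =>
    (Real.hasDerivAt_sin (a*t)).comp t (by simpa using (hasDerivAt_id t).const_mul a)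
  have hcos2 : ∀ t : ℝ, HasDerivAt (fun u => Real.cos (2*a*u)) (-Real.sin (2*a*t) * (2*a)) t := fun t =>
    (Real.hasDerivAt_cos (2*a*t)).comp t (by simpa using (hasDerivAt_id t).const_mul (2*a))
  have hsin2 : ∀ t : ℝ, HasDerivAt (fun u => Real.sin (2*a*u)) (Real.cos (2*a*t) * (2*a)) t := fun t =>
    (Real.hasDerivAt_sin (2*a*t)).comp t (by simpa using (hasDerivAt_id t).const_mul (2*a))
  refine ⟨?_, ?_, ?_, ?_, ?_, ?_, fun t => hasDerivAt_const t a, ?_, ?_, ?_, ?_, ?_, ?_,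
    ?_, ?_, ?_, ?_, ?_⟩
  · -- xp' = pxp
    intro t
    have h := ((hcos t).neg).add ((hsin t).const_mul (s/a))
    refine h.congr_deriv ?_
    field_simp
  · -- yp' = xp² py
    intro t
    have h := (((hasDerivAt_const t (-(s/(2*a)))).add ((hasDerivAt_id t).div_const (2*a))).add
      ((hsin2 t).const_mul ((a^2-(1-a^2))/(4*a^2)))).add ((hcos2 t).const_mul (s/(2*a)))
    refine h.congr_deriv ?_
    have pyth := Real.sin_sq_add_cos_sq (a*t)
    rw [show (2*a*t) = 2*(a*t) by ring, Real.cos_two_mul, Real.sin_two_mul]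
    field_simp
    linear_combination (-8*Real.sin (a*t)^2) * hs + (8*a^2-8) * pyth
  · -- pxp' = -xp py²
    intro t
    have h := ((hsin t).const_mul a).add ((hcos t).const_mul s)
    refine h.congr_deriv ?_
    field_simp
    ring
  · -- xm' = pxm
    intro t
    have h := ((hcos t).neg).sub ((hsin t).const_mul (s/a))
    refine h.congr_deriv ?_
    field_simp
  · -- ym' = xm² py
    intro t
    have h := (((hasDerivAt_const t (s/(2*a))).add ((hasDerivAt_id t).div_const (2*a))).add
      ((hsin2 t).const_mul ((a^2-(1-a^2))/(4*a^2)))).sub ((hcos2 t).const_mul (s/(2*a)))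
    refine h.congr_deriv ?_
    have pyth := Real.sin_sq_add_cos_sq (a*t)
    rw [show (2*a*t) = 2*(a*t) by ring, Real.cos_two_mul, Real.sin_two_mul]
    field_simp
    linear_combination (-8*Real.sin (a*t)^2) * hs + (8*a^2-8) * pyth
  · -- pxm' = -xm py²
    intro t
    have h := ((hsin t).const_mul a).sub ((hcos t).const_mul s)
    refine h.congr_deriv ?_
    field_simp
    ring
  · simp
  · simp
  · simp
  · simp
  · simp
  · simp
  · -- level set plus
    intro t
    have pyth := Real.sin_sq_add_cos_sq (a*t)
    field_simp
    linear_combination (Real.sin (a*t)^2 + Real.cos (a*t)^2) * hs + pyth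
  · -- level set minus
    intro t
    have pyth := Real.sin_sq_add_cos_sq (a*t)
    field_simp
    linear_combination (Real.sin (a*t)^2 + Real.cos (a*t)^2) * hs + pyth
  · -- endpoint plus
    have h1 : a * (π / a) = π := by field_simp
    have h2 : 2 * a * (π / a) = 2 * π := by field_simp
    simp only [h1, h2, Real.cos_pi, Real.sin_pi, Real.cos_two_pi, Real.sin_two_pi]
    norm_num
    rw [div_div]
    ring_nf
  · -- endpoint minus
    have h1 : a * (π / a) = π := by field_simp
    have h2 : 2 * a * (π / a) = 2 * π := by field_simp
    simp only [h1, h2, Real.cos_pi, Real.sin_pi, Real.cos_two_pi, Real.sin_two_pi]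
    norm_num
    rw [div_div]
    ring_nf
  · -- no earlier intersection
    intro t ht0 htpi h
    have hx := congrArg Prod.fst h
    simp only at hx
    have hsin_pos : 0 < Real.sin (a * t) := by
      apply Real.sin_pos_of_pos_of_lt_pi (by positivity)
      calc a * t < a * (π / a) := by exact mul_lt_mul_of_pos_left htpi ha0
        _ = π := by field_simp
    have : (s/a) * Real.sin (a*t) = 0 := by linarith
    have := mul_pos (div_pos hspos ha0) hsin_pos
    linarith
end
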